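/- arXiv:2010.13000 — 7 statements merged into one kernel-verified Lean document; each statement's English description precedes it below -/
import Mathlib

section
/- Let n, r ≥ 2 be integers and let f(t) = Σ_{i=0}^{r-1} t^{2i} − t·Σ_{i=0}^{r-2} t^{2i} ∈ ℤ[t]. Then the image of f in the quotient ring ℤ[t]/(t^n − 1) is a unit if and only if gcd(4r − 2, n) = 1. -/
open Polynomial Finset

/-- Product of geometric sums. -/
lemma my_geom_prod {R : Type*} [CommRing R] (y : R) (a b : ℕ) :
    (∑ j ∈ Finset.range a, y ^ j) * (∑ i ∈ Finset.range b, y ^ (a * i)) =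
      ∑ k ∈ Finset.range (a * b), y ^ k := by
  induction b with
  | zero => simp
  | succ b ih =>
    rw [Finset.sum_range_succ, mul_add, ih, Nat.mul_succ, Finset.sum_range_add]
    congr 1
    rw [Finset.sum_mul]
    apply Finset.sum_congr rfl
    intro j _
    rw [← pow_add]
    ring_nf

/-- The alternating sum identity. -/
lemma my_alt_sum {R : Type*} [CommRing R] (x : R) (r : ℕ) :
    ∑ j ∈ Finset.range (2 * r + 1), (-x) ^ j =
      (∑ i ∈ Finset.range (r + 1), x ^ (2 * i)) - x * ∑ i ∈ Finset.range r, x ^ (2 * i) := by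
  induction r with
  | zero => simp
  | succ r ih =>
    have h1 : 2 * (r + 1) + 1 = (2 * r + 1) + 1 + 1 := by ring
    rw [h1, Finset.sum_range_succ, Finset.sum_range_succ, ih,
      Finset.sum_range_succ (fun i => x ^ (2 * i)) (r + 1), Finset.sum_range_succ (fun i => x ^ (2 * i)) r]
    have e1 : (-x) ^ (2 * r + 1) = -(x ^ (2 * r + 1)) := Odd.neg_pow ⟨r, by ring⟩ x
    have e2 : (-x) ^ (2 * r + 1 + 1) = x ^ (2 * r + 1 + 1) := Even.neg_pow ⟨r + 1, by ring⟩ x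
    rw [e1, e2, show 2 * (r + 1) = 2 * r + 1 + 1 by ring]
    ring

open Polynomial in
theorem stmt_4 (n r : ℕ) (hn : 2 ≤ n) (hr : 2 ≤ r) :
    IsUnit (Ideal.Quotient.mk (Ideal.span {(X : ℤ[X]) ^ n - 1})
        ((∑ i ∈ Finset.range r, (X : ℤ[X]) ^ (2 * i)) -
          X * ∑ i ∈ Finset.range (r - 1), (X : ℤ[X]) ^ (2 * i)))
      ↔ Nat.gcd (4 * r - 2) n = 1 := by
  set I : Ideal ℤ[X] := Ideal.span {(X : ℤ[X]) ^ n - 1} with hI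
  set π := Ideal.Quotient.mk I with hπ
  set F : ℤ[X] := (∑ i ∈ Finset.range r, (X : ℤ[X]) ^ (2 * i)) -
          X * ∑ i ∈ Finset.range (r - 1), (X : ℤ[X]) ^ (2 * i) with hF
  obtain ⟨r0, rfl⟩ : ∃ r0, r = r0 + 1 := ⟨r - 1, by omega⟩
  -- F = alternating sum of length 2 r0 + 1
  have hFalt : ∀ {S : Type} [CommRing S] (φ : ℤ[X] →+* S),
      φ F = ∑ j ∈ Finset.range (2 * r0 + 1), (-(φ X)) ^ j := by
    intro S _ φ
    rw [my_alt_sum, hF, map_sub, map_mul, map_sum, map_sum]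
    simp only [map_pow, Nat.add_sub_cancel]
  constructor
  · -- IsUnit → gcd = 1
    intro h
    by_contra hg
    obtain ⟨p, hp, hpd⟩ := Nat.exists_prime_and_dvd hg
    have hpn : p ∣ n := hpd.trans (Nat.gcd_dvd_right _ _)
    have hpm : p ∣ 4 * (r0 + 1) - 2 := hpd.trans (Nat.gcd_dvd_left _ _)
    rcases eq_or_ne p 2 with hp2 | hp2
    · -- p = 2 : evaluate at -1
      subst hp2
      have hkill : ∀ a ∈ I, Polynomial.eval (-1 : ℤ) a = 0 := by
        intro a ha
        rw [hI, Ideal.mem_span_singleton] at ha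
        obtain ⟨c, rfl⟩ := ha
        obtain ⟨k, hk⟩ := hpn
        simp [hk, pow_mul]
      let φ : (ℤ[X] ⧸ I) →+* ℤ := Ideal.Quotient.lift I (Polynomial.evalRingHom (-1)) hkill
      have h2 : IsUnit (φ (π F)) := h.map φ
      have hφ : φ (π F) = Polynomial.eval (-1 : ℤ) F := rfl
      rw [hφ, hF] at h2
      simp only [eval_sub, eval_mul, eval_X, eval_finset_sum, eval_pow, pow_mul, neg_one_sq,
        one_pow, Finset.sum_const, Finset.card_range, nsmul_eq_mul, mul_one] at h2
      rw [Int.isUnit_iff] at h2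
      rcases h2 with h2 | h2 <;> omega
    · -- p odd : map to (ZMod 2)[X] ⧸ (X^p - 1)
      have hp3 : 3 ≤ p := by
        rcases hp.two_le.lt_or_eq with h' | h'
        · omega
        · omega
      have hpodd : p ∣ 2 * (r0 + 1) - 1 := by
        have h4 : 4 * (r0 + 1) - 2 = 2 * (2 * (r0 + 1) - 1) := by omega
        rw [h4] at hpm
        refine (Nat.Coprime.dvd_of_dvd_mul_left ?_ hpm)
        exact (Nat.coprime_primes hp Nat.prime_two).mpr hp2
      set J : Ideal ((ZMod 2)[X]) := Ideal.span {(X : (ZMod 2)[X]) ^ p - 1} with hJ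
      set π2 := Ideal.Quotient.mk J with hπ2
      set ψ : ℤ[X] →+* ((ZMod 2)[X] ⧸ J) :=
        π2.comp (Polynomial.mapRingHom (Int.castRingHom (ZMod 2))) with hψ
      have hkill : ∀ a ∈ I, ψ a = 0 := by
        intro a ha
        rw [hI, Ideal.mem_span_singleton] at ha
        obtain ⟨c, rfl⟩ := ha
        rw [map_mul]
        have : ψ ((X : ℤ[X]) ^ n - 1) = 0 := by
          rw [hψ, RingHom.comp_apply]
          rw [Ideal.Quotient.eq_zero_iff_mem, hJ, Ideal.mem_span_singleton]
          obtain ⟨k, hk⟩ := hpn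
          simp only [Polynomial.coe_mapRingHom, Polynomial.map_sub, Polynomial.map_pow, Polynomial.map_one, Polynomial.map_X]
          rw [hk, pow_mul]
          have := sub_dvd_pow_sub_pow ((X : (ZMod 2)[X]) ^ p) 1 k
          simpa using this
        rw [this, zero_mul]
      let φ : (ℤ[X] ⧸ I) →+* ((ZMod 2)[X] ⧸ J) := Ideal.Quotient.lift I ψ hkill
      have h2 : IsUnit (φ (π F)) := h.map φ
      have hφ : φ (π F) = ψ F := rfl
      rw [hφ] at h2
      -- compute ψ F as geometric sum
      set y : (ZMod 2)[X] ⧸ J := ψ X with hy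
      have hneg : (-y) = y := by
        have h20 : (2 : (ZMod 2)[X] ⧸ J) = 0 := by
          have hz : (2 : ZMod 2) = 0 := rfl
          calc (2 : (ZMod 2)[X] ⧸ J) = (π2.comp Polynomial.C) (2 : ZMod 2) :=
                (map_ofNat (π2.comp Polynomial.C) 2).symm
            _ = 0 := by rw [hz, map_zero]
        linear_combination (-y) * h20
      have hFy : ψ F = ∑ j ∈ Finset.range (2 * r0 + 1), y ^ j := by
        rw [hFalt ψ]
        apply Finset.sum_congr rfl
        intro j _
        rw [hneg]
      have hyp : y ^ p = 1 := by
        have : π2 ((X : (ZMod 2)[X]) ^ p - 1) = 0 := by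
          rw [Ideal.Quotient.eq_zero_iff_mem, hJ]
          exact Ideal.subset_span rfl
        have h' : y ^ p - 1 = 0 := by
          rw [hy, hψ, RingHom.comp_apply]
          simpa [map_sub, map_pow] using this
        linear_combination h'
      have hzero : ψ F * (y - 1) = 0 := by
        rw [hFy, geom_sum_mul]
        obtain ⟨k, hk⟩ := hpodd
        rw [show 2 * r0 + 1 = 2 * (r0 + 1) - 1 by omega, hk, pow_mul, hyp, one_pow, sub_self]
      have hy1 : y - 1 ≠ 0 := by
        intro hcon
        have : π2 ((X : (ZMod 2)[X]) - 1) = 0 := by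
          have : ψ ((X : ℤ[X]) - 1) = π2 ((X : (ZMod 2)[X]) - 1) := by
            rw [hψ, RingHom.comp_apply]
            norm_num
          rw [← this]
          rw [map_sub, map_one]
          exact hcon
        rw [Ideal.Quotient.eq_zero_iff_mem, hJ, Ideal.mem_span_singleton] at this
        have hne : ((X : (ZMod 2)[X]) - 1) ≠ 0 := by
          have := Polynomial.X_sub_C_ne_zero (1 : ZMod 2)
          simpa using this
        have hdeg := Polynomial.natDegree_le_of_dvd this hne
        have hd1 : ((X : (ZMod 2)[X]) - 1).natDegree = 1 := by
          have := Polynomial.natDegree_X_sub_C (1 : ZMod 2)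
          simpa using this
        have hd2 : ((X : (ZMod 2)[X]) ^ p - 1).natDegree = p := by
          have := Polynomial.natDegree_X_pow_sub_C (R := ZMod 2) (n := p) (r := 1)
          simpa using this
        omega
      exact hy1 ((IsUnit.mul_right_eq_zero h2).mp hzero)
  · -- gcd = 1 → IsUnit
    intro h
    set m := 2 * (r0 + 1) - 1 with hm
    have hmn : Nat.Coprime m n := by
      have h4 : 4 * (r0 + 1) - 2 = 2 * m := by omega
      have : Nat.Coprime (2 * m) n := by rw [← h4]; exact h
      exact Nat.Coprime.coprime_dvd_left ⟨2, by ring⟩ this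
    have hnodd : ¬ (2 ∣ n) := by
      intro h2n
      have h2m : (2:ℕ) ∣ 4 * (r0 + 1) - 2 := ⟨2 * (r0 + 1) - 1, by omega⟩
      have := Nat.dvd_gcd h2m h2n
      rw [h] at this
      omega
    have hm2 : Nat.Coprime m 2 :=
      ((Nat.Prime.coprime_iff_not_dvd Nat.prime_two).mpr (by omega)).symm
    have hm2n : Nat.Coprime m (2 * n) := Nat.Coprime.mul_right hm2 hmn
    obtain ⟨m', -, hmm'⟩ := Nat.exists_mul_mod_eq_one_of_coprime hm2n (by omega)
    have hsplit : m * m' = 2 * n * (m * m' / (2 * n)) + 1 := by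
      conv_lhs => rw [← Nat.div_add_mod (m * m') (2 * n)]
      rw [hmm']
    set q := m * m' / (2 * n) with hq
    set x : ℤ[X] ⧸ I := π X with hx
    have hxn : x ^ n = 1 := by
      have h0 : π ((X : ℤ[X]) ^ n - 1) = 0 := by
        rw [Ideal.Quotient.eq_zero_iff_mem]; exact Ideal.subset_span rfl
      have h' : x ^ n - 1 = 0 := by simpa [map_sub, map_pow] using h0
      linear_combination h'
    set s : ℤ[X] ⧸ I := -x with hs
    have hnodd2 : Odd n := Nat.odd_iff.mpr (by omega)
    have hsn : s ^ n = -1 := by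
      have e : (-x) ^ n = -(x ^ n) := Odd.neg_pow hnodd2 x
      rw [hs, e, hxn]
    have hs2n : s ^ (2 * n) = 1 := by
      rw [show 2 * n = n * 2 by ring, pow_mul, hsn]
      ring
    have hFs : π F = ∑ j ∈ Finset.range (2 * r0 + 1), s ^ j := by
      rw [hFalt π]
    have key : π F * (∑ i ∈ Finset.range m', s ^ (m * i)) = 1 := by
      rw [hFs, show 2 * r0 + 1 = m by omega, my_geom_prod s m m', hsplit,
        Finset.sum_range_succ]
      have hA : (∑ k ∈ Finset.range (2 * n * q), s ^ k) = 0 := by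
        rw [← my_geom_prod s (2 * n) q]
        have hB : (∑ j ∈ Finset.range (n * 2), s ^ j) = 0 := by
          rw [← my_geom_prod s n 2, Finset.sum_range_succ, Finset.sum_range_one]
          rw [mul_zero, pow_zero, mul_one, hsn]
          ring
        rw [show 2 * n = n * 2 by ring, hB, zero_mul]
      rw [hA, pow_mul, hs2n, one_pow]
      ring
    exact IsUnit.of_mul_eq_one _ key
end

section
/- Let f ∈ ℤ[X] and n ≥ 1. Then the image of f in ℤ[X]/(X^n − 1) is a unit if and only if the product of f(λ) over all complex n-th roots of unity λ equals 1 or −1. -/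
open Polynomial

-- det of a multiset product of linear factors evaluated at a matrix
private lemma det_aeval_linear_prod {ι : Type*} [Fintype ι] [DecidableEq ι]
    (A : Matrix ι ι ℂ) (t : Multiset ℂ) :
    (Polynomial.aeval A ((t.map fun μ => (X : ℂ[X]) - C μ)).prod).det
      = (t.map fun μ => (A - Matrix.scalar ι μ).det).prod := by
  induction t using Multiset.induction with
  | empty => simp
  | cons μ t ih =>
      rw [Multiset.map_cons, Multiset.prod_cons, map_mul, Matrix.det_mul,
        Multiset.map_cons, Multiset.prod_cons, ← ih]
      congr 1
      rw [map_sub, aeval_X, aeval_C]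
      rfl

private lemma eval_charpoly' {ι : Type*} [Fintype ι] [DecidableEq ι]
    (A : Matrix ι ι ℂ) (μ : ℂ) :
    (Matrix.charpoly A).eval μ = (Matrix.scalar ι μ - A).det := by
  rw [Matrix.charpoly, _root_.eval_det, Matrix.matPolyEquiv_charmatrix]
  simp

private lemma det_aeval_eq_prod {ι : Type*} [Fintype ι] [DecidableEq ι] {n : ℕ} (hn : 1 ≤ n)
    (hcard : Fintype.card ι = n) (A : Matrix ι ι ℂ)
    (hA : Matrix.charpoly A = X ^ n - 1) (g : ℂ[X]) :
    (Polynomial.aeval A g).det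
      = ((Polynomial.nthRoots n (1 : ℂ)).map (fun lam => Polynomial.eval lam g)).prod := by
  have hn0 : n ≠ 0 := by omega
  set s : Multiset ℂ := Polynomial.nthRoots n (1 : ℂ) with hs
  have hmonic : ((X : ℂ[X]) ^ n - 1).Monic := by
    simpa using monic_X_pow_sub_C (1 : ℂ) hn0
  have hroots : ((X : ℂ[X]) ^ n - 1).roots = s := by
    simp [hs, nthRoots]
  have hcards : Multiset.card s = n := by
    rw [← hroots]
    rw [splits_iff_card_roots.mp (IsAlgClosed.splits _)]
    simpa using (natDegree_X_pow_sub_C (n := n) (r := (1 : ℂ)))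
  have hsplit : ((X : ℂ[X]) ^ n - 1) = (s.map fun lam => X - C lam).prod := by
    conv_lhs => rw [(IsAlgClosed.splits _).eq_prod_roots_of_monic hmonic]
    rw [hroots]
  -- each det (A - scalar μ) = ∏_{λ ∈ s} (λ - μ)
  have hdet : ∀ μ : ℂ, (A - Matrix.scalar ι μ).det = (s.map fun lam => lam - μ).prod := by
    intro μ
    have h1 : (A - Matrix.scalar ι μ) = -(Matrix.scalar ι μ - A) := (neg_sub _ _).symm
    rw [h1, Matrix.det_neg, ← eval_charpoly', hA, hsplit, eval_multiset_prod,
      Multiset.map_map, hcard]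
    have : (s.map fun lam => lam - μ) = s.map fun lam => (-1) * ((fun la => eval μ (X - C la)) lam) := by
      apply Multiset.map_congr rfl
      intro x hx
      simp only [eval_sub, eval_X, eval_C]; ring
    rw [this, Multiset.prod_map_mul]
    congr 1
    rw [Multiset.map_const', Multiset.prod_replicate, hcards]
  have hg : g = C g.leadingCoeff * (g.roots.map fun μ => X - C μ).prod :=
    (IsAlgClosed.splits g).eq_prod_roots
  conv_lhs => rw [hg]
  rw [map_mul, Matrix.det_mul, det_aeval_linear_prod]
  have hC : (Polynomial.aeval A (C g.leadingCoeff)).det = g.leadingCoeff ^ n := by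
    rw [aeval_C, Algebra.algebraMap_eq_smul_one, Matrix.det_smul, Matrix.det_one, hcard, mul_one]
  rw [hC]
  -- rewrite each factor and swap double products
  have hswap :
      (g.roots.map fun μ => (A - Matrix.scalar ι μ).det).prod
        = (s.map fun lam => (g.roots.map fun μ => lam - μ).prod).prod := by
    have : (g.roots.map fun μ => (A - Matrix.scalar ι μ).det)
        = g.roots.map fun μ => (s.map fun lam => lam - μ).prod := by
      apply Multiset.map_congr rfl
      intro μ _
      exact hdet μ
    rw [this, Multiset.prod_map_prod_map]
  rw [hswap]
  have hrhsfac : (s.map fun lam => Polynomial.eval lam g)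
      = s.map fun lam => g.leadingCoeff * (g.roots.map fun μ => lam - μ).prod := by
    apply Multiset.map_congr rfl
    intro lam _
    conv_lhs => rw [hg]
    rw [eval_mul, eval_C, eval_multiset_prod, Multiset.map_map]
    congr 1
    apply congr_arg Multiset.prod
    apply Multiset.map_congr rfl
    intro μ _
    simp
  rw [hrhsfac, Multiset.prod_map_mul, Multiset.map_const', Multiset.prod_replicate, hcards]
open Polynomial

private lemma entry_eq {R : Type*} [CommRing R] (p : R[X]) (hp : p.Monic) (f : R[X]) (i j : Fin p.natDegree) :
    Algebra.leftMulMatrix (AdjoinRoot.powerBasis' hp).basis (AdjoinRoot.mk p f) i j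
      = ((f * X ^ (j : ℕ)) %ₘ p).coeff (i : ℕ) := by
  erw [Algebra.leftMulMatrix_eq_repr_mul]
  have hb : (AdjoinRoot.powerBasis' hp).basis j = AdjoinRoot.mk p (X ^ (j : ℕ)) := by
    erw [(AdjoinRoot.powerBasis' hp).basis_eq_pow]
    rw [AdjoinRoot.powerBasis'_gen, map_pow, AdjoinRoot.mk_X]
  rw [hb, ← map_mul]
  show (AdjoinRoot.powerBasisAux' hp).repr (AdjoinRoot.mk p (f * X ^ (j : ℕ))) i = _
  rw [AdjoinRoot.powerBasisAux'_repr_apply_to_fun, AdjoinRoot.modByMonicHom_mk]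

private lemma isUnit_norm_iff {R S : Type*} [CommRing R] [CommRing S] [Algebra R S]
    {ι : Type*} [Fintype ι] [DecidableEq ι] (b : Module.Basis ι R S) (x : S) :
    IsUnit (Algebra.norm R x) ↔ IsUnit x := by
  constructor
  · intro h
    rw [Algebra.norm_eq_matrix_det b] at h
    have hM : IsUnit (Algebra.leftMulMatrix b x) := (Matrix.isUnit_iff_isUnit_det _).mpr h
    have h2 : Matrix.toLinAlgEquiv b (Algebra.leftMulMatrix b x) = Algebra.lmul R S x := by
      rw [Algebra.leftMulMatrix_apply]
      exact Matrix.toLinAlgEquiv_toMatrixAlgEquiv b (Algebra.lmul R S x)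
    exact Algebra.lmul_isUnit_iff.mp (h2 ▸ hM.map (Matrix.toLinAlgEquiv b))
  · intro h
    exact h.map (Algebra.norm R)

private lemma norm_cast_eq (n : ℕ) (hn : 1 ≤ n) (f : ℤ[X]) :
    ((Algebra.norm ℤ (AdjoinRoot.mk ((X : ℤ[X]) ^ n - 1) f) : ℤ) : ℂ)
      = ((Polynomial.nthRoots n (1 : ℂ)).map (fun lam => Polynomial.aeval lam f)).prod := by
  have hn0 : n ≠ 0 := by omega
  set p : ℤ[X] := (X : ℤ[X]) ^ n - 1 with hpdef
  have hp : p.Monic := by simpa [hpdef] using monic_X_pow_sub_C (1 : ℤ) hn0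
  set q : ℂ[X] := p.map (Int.castRingHom ℂ) with hqdef
  have hq : q.Monic := hp.map _
  have hq' : q = (X : ℂ[X]) ^ n - 1 := by
    simp [hqdef, hpdef, Polynomial.map_sub, Polynomial.map_pow, Polynomial.map_one, Polynomial.map_X]
  have hd : q.natDegree = p.natDegree := hp.natDegree_map _
  have hpn : p.natDegree = n := by
    simpa [hpdef] using (natDegree_X_pow_sub_C (n := n) (r := (1 : ℤ)))
  set fc : ℂ[X] := f.map (Int.castRingHom ℂ) with hfc
  set M := Algebra.leftMulMatrix (AdjoinRoot.powerBasis' hp).basis (AdjoinRoot.mk p f) with hM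
  set Mc := Algebra.leftMulMatrix (AdjoinRoot.powerBasis' hq).basis (AdjoinRoot.mk q fc) with hMc
  have hnorm : Algebra.norm ℤ (AdjoinRoot.mk p f) = M.det :=
    Algebra.norm_eq_matrix_det (AdjoinRoot.powerBasis' hp).basis _
  rw [hnorm]
  have hcast : ((M.det : ℤ) : ℂ) = (M.map (Int.cast : ℤ → ℂ)).det := by
    exact (RingHom.map_det (Int.castRingHom ℂ) M)
  rw [hcast]
  have hMmap : M.map (Int.cast : ℤ → ℂ)
      = Mc.submatrix (finCongr hd.symm) (finCongr hd.symm) := by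
    ext i j
    erw [Matrix.map_apply, Matrix.submatrix_apply, hM, hMc, entry_eq p hp f i j,
      entry_eq q hq fc (finCongr hd.symm i) (finCongr hd.symm j)]
    show ((((f * X ^ (j : ℕ)) %ₘ p).coeff (i : ℕ) : ℤ) : ℂ) = ((fc * X ^ (j : ℕ)) %ₘ q).coeff (i : ℕ)
    have : ((f * X ^ (j : ℕ)) %ₘ p).map (Int.castRingHom ℂ) = (fc * X ^ (j : ℕ)) %ₘ q := by
      rw [Polynomial.map_modByMonic _ hp, Polynomial.map_mul, Polynomial.map_pow,
        Polynomial.map_X]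
    calc ((((f * X ^ (j : ℕ)) %ₘ p).coeff (i : ℕ) : ℤ) : ℂ)
        = (((f * X ^ (j : ℕ)) %ₘ p).map (Int.castRingHom ℂ)).coeff (i : ℕ) := by
          rw [Polynomial.coeff_map]; rfl
      _ = ((fc * X ^ (j : ℕ)) %ₘ q).coeff (i : ℕ) := by rw [this]
  rw [hMmap]
  refine Eq.trans (Matrix.det_submatrix_equiv_self (finCongr hd.symm) Mc) ?_
  -- now compute det Mc
  have hmk : AdjoinRoot.mk q fc = Polynomial.aeval (AdjoinRoot.root q) fc :=
    (AdjoinRoot.aeval_eq fc).symm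
  set A := Algebra.leftMulMatrix (AdjoinRoot.powerBasis' hq).basis (AdjoinRoot.root q) with hA
  have hMcA : Mc = Polynomial.aeval A fc := by
    rw [hMc, hmk, hA, ← Polynomial.aeval_algHom_apply]
  have hchar : Matrix.charpoly A = (X : ℂ[X]) ^ n - 1 := by
    have h1 : Matrix.charpoly A = minpoly ℂ ((AdjoinRoot.powerBasis' hq).gen) := by
      rw [hA]
      exact charpoly_leftMulMatrix (AdjoinRoot.powerBasis' hq)
    rw [h1, AdjoinRoot.powerBasis'_gen, AdjoinRoot.minpoly_root hq.ne_zero,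
      hq.leadingCoeff, inv_one, map_one, mul_one, hq']
  have hcard : Fintype.card (Fin (AdjoinRoot.powerBasis' hq).dim) = n := by
    rw [Fintype.card_fin, AdjoinRoot.powerBasis'_dim, hd, hpn]
  rw [hMcA]
  refine (det_aeval_eq_prod hn hcard A hchar fc).trans ?_
  apply congr_arg Multiset.prod
  apply Multiset.map_congr rfl
  intro lam _
  rw [hfc, Polynomial.aeval_def, Polynomial.eval₂_eq_eval_map, algebraMap_int_eq]

open Polynomial in
theorem stmt_5 (f : ℤ[X]) (n : ℕ) (hn : 1 ≤ n) :
    IsUnit (Ideal.Quotient.mk (Ideal.span {(X : ℤ[X]) ^ n - 1}) f)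
      ↔ ((Polynomial.nthRoots n (1 : ℂ)).map (fun lam => Polynomial.aeval lam f)).prod = 1 ∨
        ((Polynomial.nthRoots n (1 : ℂ)).map (fun lam => Polynomial.aeval lam f)).prod = -1 := by
  have hn0 : n ≠ 0 := by omega
  have hp : ((X : ℤ[X]) ^ n - 1).Monic := by simpa using monic_X_pow_sub_C (1 : ℤ) hn0
  have h1 : IsUnit (Ideal.Quotient.mk (Ideal.span {(X : ℤ[X]) ^ n - 1}) f)
      ↔ IsUnit (Algebra.norm ℤ (AdjoinRoot.mk ((X : ℤ[X]) ^ n - 1) f)) :=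
    (isUnit_norm_iff (AdjoinRoot.powerBasis' hp).basis _).symm
  rw [h1, Int.isUnit_iff]
  have h2 := norm_cast_eq n hn f
  set N := Algebra.norm ℤ (AdjoinRoot.mk ((X : ℤ[X]) ^ n - 1) f)
  constructor
  · rintro (h | h)
    · left; rw [← h2, h]; norm_num
    · right; rw [← h2, h]; norm_num
  · rintro (h | h)
    · left; rw [← h2] at h; exact_mod_cast h
    · right; rw [← h2] at h; exact_mod_cast h
end

section
/- Let r, s ≥ 1 and n ≥ 2 be integers, and let f(t) = Σ_{i=0}^{r-1} t^i − t^r · Σ_{i=0}^{s-1} t^i ∈ ℤ[t]. Then the product of f(λ) over all complex n-th roots of unity λ has absolute value 1 if and only if |r − s| = 1 and (n divides r or n divides s). -/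
open Polynomial Complex



lemma core_id (l m : ℂ) (hl : Complex.normSq l = 1) (hm : Complex.normSq m = 1) :
    Complex.normSq (1 - 2*m + m^2*l) =
      Complex.normSq (1 - l) + Complex.normSq (1 - m) * Complex.normSq (1 - m*l) := by
  have hl0 : l ≠ 0 := by intro h; rw [h] at hl; simp at hl
  have hm0 : m ≠ 0 := by intro h; rw [h] at hm; simp at hm
  have h1 : l * (starRingEnd ℂ) l = 1 := by rw [Complex.mul_conj, hl, Complex.ofReal_one]
  have h2 : m * (starRingEnd ℂ) m = 1 := by rw [Complex.mul_conj, hm, Complex.ofReal_one]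
  have hcl : (starRingEnd ℂ) l = l⁻¹ := by field_simp [mul_comm] at h1 ⊢; linear_combination h1
  have hcm : (starRingEnd ℂ) m = m⁻¹ := by field_simp [mul_comm] at h2 ⊢; linear_combination h2
  rw [← Complex.ofReal_inj]
  push_cast
  rw [← Complex.mul_conj, ← Complex.mul_conj, ← Complex.mul_conj, ← Complex.mul_conj]
  simp only [map_add, map_sub, map_mul, map_one, map_pow, map_ofNat, hcl, hcm]
  field_simp
  ring



noncomputable def FF (r s : ℕ) : ℤ[X] :=
  (∑ i ∈ Finset.range r, (X : ℤ[X]) ^ i) - X ^ r * ∑ i ∈ Finset.range s, (X : ℤ[X]) ^ i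

lemma aeval_FF (r s : ℕ) (l : ℂ) :
    aeval l (FF r s) = (∑ i ∈ Finset.range r, l ^ i) - l ^ r * ∑ i ∈ Finset.range s, l ^ i := by
  simp [FF]

lemma master (r s : ℕ) (hrs : s = r + 1 ∨ r = s + 1) {l : ℂ} (hl : Complex.normSq l = 1) :
    Complex.normSq ((l - 1) * aeval l (FF r s)) =
      Complex.normSq (1 - l) + Complex.normSq (1 - l ^ r) * Complex.normSq (1 - l ^ s) := by
  have hl0 : l ≠ 0 := by intro h; rw [h] at hl; simp at hl
  have key : (l - 1) * aeval l (FF r s) = (l ^ r - 1) - l ^ r * (l ^ s - 1) := by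
    have g : ∀ m : ℕ, (l - 1) * ∑ i ∈ Finset.range m, l ^ i = l ^ m - 1 := by
      intro m; rw [mul_comm, geom_sum_mul]
    rw [aeval_FF]
    calc (l - 1) * ((∑ i ∈ Finset.range r, l ^ i) - l ^ r * ∑ i ∈ Finset.range s, l ^ i)
        = (l - 1) * (∑ i ∈ Finset.range r, l ^ i)
          - l ^ r * ((l - 1) * ∑ i ∈ Finset.range s, l ^ i) := by ring
      _ = (l ^ r - 1) - l ^ r * (l ^ s - 1) := by rw [g r, g s]
  have hmr : Complex.normSq (l ^ r) = 1 := by rw [map_pow, hl, one_pow]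
  rcases hrs with h | h
  · subst h
    have e : (l ^ r - 1) - l ^ r * (l ^ (r+1) - 1) = -(1 - 2*(l^r) + (l^r)^2 * l) := by
      rw [pow_succ]; ring
    rw [key, e, Complex.normSq_neg, core_id l (l^r) hl hmr, ← pow_succ]
  · subst h
    have e : (l ^ (s+1) - 1) - l ^ (s+1) * (l ^ s - 1) = -(1 - 2*(l^(s+1)) + (l^(s+1))^2 * l⁻¹) := by
      field_simp
      ring
    rw [key, e, Complex.normSq_neg, core_id l⁻¹ (l^(s+1)) (by rw [Complex.normSq_inv, hl, inv_one]) hmr]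
    have e1 : Complex.normSq (1 - l⁻¹) = Complex.normSq (1 - l) := by
      have : (1 - l⁻¹) = -l⁻¹ * (1 - l) := by field_simp; ring
      rw [this, Complex.normSq_mul, Complex.normSq_neg, Complex.normSq_inv, hl, inv_one, one_mul]
    have e2 : l ^ (s+1) * l⁻¹ = l ^ s := by
      rw [pow_succ, mul_assoc, mul_inv_cancel₀ hl0, mul_one]
    rw [e1, e2]




lemma normSq_one_of_pow {l : ℂ} {n : ℕ} (hn : n ≠ 0) (h : l ^ n = 1) : Complex.normSq l = 1 := by
  have h1 : Complex.normSq l ^ n = 1 := by rw [← map_pow, h, map_one]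
  have h2 : 0 ≤ Complex.normSq l := Complex.normSq_nonneg l
  rcases lt_trichotomy (Complex.normSq l) 1 with h' | h' | h'
  · exact absurd h1 (by nlinarith [pow_lt_one₀ h2 h' hn])
  · exact h'
  · exact absurd h1 (by nlinarith [one_lt_pow₀ h' hn])

lemma normSq_eval (r s : ℕ) (hrs : s = r + 1 ∨ r = s + 1) {l : ℂ} (hl : Complex.normSq l = 1) :
    Complex.normSq (1 - l) * Complex.normSq (aeval l (FF r s)) =
      Complex.normSq (1 - l) + Complex.normSq (1 - l ^ r) * Complex.normSq (1 - l ^ s) := by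
  have h := master r s hrs hl
  rw [Complex.normSq_mul] at h
  rw [← h]
  congr 1
  rw [show l - 1 = -(1 - l) by ring, Complex.normSq_neg]

lemma abs_eval_eq_one (r s : ℕ) (hrs : s = r + 1 ∨ r = s + 1) {l : ℂ}
    (hl : Complex.normSq l = 1) (hl1 : l ≠ 1) (h : l ^ r = 1 ∨ l ^ s = 1) :
    ‖aeval l (FF r s)‖ = 1 := by
  have hd : 0 < Complex.normSq (1 - l) := Complex.normSq_pos.mpr (sub_ne_zero.mpr (Ne.symm hl1))
  have key := normSq_eval r s hrs hl
  have ht : Complex.normSq (1 - l ^ r) * Complex.normSq (1 - l ^ s) = 0 := by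
    rcases h with h | h <;> rw [h] <;> simp
  rw [ht, add_zero] at key
  have ha : Complex.normSq (aeval l (FF r s)) = 1 :=
    mul_left_cancel₀ (ne_of_gt hd) (by rw [key, mul_one])
  have := Complex.sq_norm (aeval l (FF r s))
  nlinarith [norm_nonneg (aeval l (FF r s))]

lemma abs_eval_gt_one (r s : ℕ) (hrs : s = r + 1 ∨ r = s + 1) {l : ℂ}
    (hl : Complex.normSq l = 1) (hl1 : l ≠ 1) (h1 : l ^ r ≠ 1) (h2 : l ^ s ≠ 1) :
    1 < ‖aeval l (FF r s)‖ := by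
  have hd : 0 < Complex.normSq (1 - l) := Complex.normSq_pos.mpr (sub_ne_zero.mpr (Ne.symm hl1))
  have key := normSq_eval r s hrs hl
  have ht : 0 < Complex.normSq (1 - l ^ r) * Complex.normSq (1 - l ^ s) :=
    mul_pos (Complex.normSq_pos.mpr (sub_ne_zero.mpr (Ne.symm h1)))
      (Complex.normSq_pos.mpr (sub_ne_zero.mpr (Ne.symm h2)))
  have ha : 1 < Complex.normSq (aeval l (FF r s)) := by nlinarith
  have := Complex.sq_norm (aeval l (FF r s))
  nlinarith [norm_nonneg (aeval l (FF r s))]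

lemma aeval_one_FF (r s : ℕ) : aeval (1:ℂ) (FF r s) = ((r : ℂ) - s) := by
  simp [FF]

lemma abs_aeval_one (r s : ℕ) :
    ‖aeval (1:ℂ) (FF r s)‖ = ((|(r:ℤ) - s| : ℤ) : ℝ) := by
  rw [aeval_one_FF]
  rw [show ((r:ℂ) - s) = (((r:ℤ) - s : ℤ) : ℂ) by push_cast; ring]
  rw [Complex.norm_intCast]
  push_cast
  ring



-- transfer of nthRoots multisets along injective ring homs
lemma map_nthRoots_eq {K L : Type*} [Field K] [Field L] {n : ℕ} (hn : 0 < n)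
    (φ : K →+* L) {ζK : K} {ζL : L} (hζK : IsPrimitiveRoot ζK n) (hζL : IsPrimitiveRoot ζL n) :
    (Polynomial.nthRoots n (1:K)).map φ = Polynomial.nthRoots n (1:L) := by
  have nd : ((Polynomial.nthRoots n (1:K)).map φ).Nodup :=
    (hζK.nthRoots_nodup one_ne_zero).map φ.injective
  have hsub : (Polynomial.nthRoots n (1:K)).map φ ⊆ Polynomial.nthRoots n (1:L) := by
    intro x hx
    obtain ⟨y, hy, rfl⟩ := Multiset.mem_map.mp hx
    rw [Polynomial.mem_nthRoots hn] at hy ⊢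
    rw [← map_pow, hy, map_one]
  refine Multiset.eq_of_le_of_card_le ((Multiset.le_iff_subset nd).mpr hsub) ?_
  rw [hζL.card_nthRoots, Multiset.card_map, hζK.card_nthRoots,
    if_pos (⟨ζK, hζK.pow_eq_one⟩ : ∃ α : K, α ^ n = 1),
    if_pos (⟨ζL, hζL.pow_eq_one⟩ : ∃ α : L, α ^ n = 1)]

lemma aeval_ringHom {K L : Type*} [CommRing K] [CommRing L] (φ : K →+* L) (q : Polynomial ℤ)
    (x : K) : φ (aeval x q) = aeval (φ x) q :=
  (Polynomial.aeval_algHom_apply φ.toIntAlgHom x q).symm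

lemma prod_transfer {K L : Type*} [Field K] [Field L] [DecidableEq K] [DecidableEq L] {n : ℕ} (hn : 0 < n)
    (φ : K →+* L) {ζK : K} {ζL : L} (hζK : IsPrimitiveRoot ζK n) (hζL : IsPrimitiveRoot ζL n)
    (q : Polynomial ℤ) :
    φ ((((Polynomial.nthRoots n (1:K)).erase 1).map (fun l => aeval l q)).prod)
      = (((Polynomial.nthRoots n (1:L)).erase 1).map (fun l => aeval l q)).prod := by
  rw [map_multiset_prod, Multiset.map_map]
  have h1 : ((Polynomial.nthRoots n (1:K)).erase 1).map (φ ∘ fun l => aeval l q)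
      = (((Polynomial.nthRoots n (1:K)).erase 1).map φ).map (fun l => aeval l q) := by
    rw [Multiset.map_map]
    exact Multiset.map_congr rfl (fun x _ => aeval_ringHom φ q x)
  rw [h1, Multiset.map_erase φ φ.injective 1, map_one,
    map_nthRoots_eq hn φ hζK hζL]

lemma exists_int_prod (q : Polynomial ℤ) (n : ℕ) (hn : 0 < n) :
    ∃ z : ℤ, (((Polynomial.nthRoots n (1:ℂ)).erase 1).map (fun l => aeval l q)).prod = (z : ℂ) := by
  set n' : ℕ+ := ⟨n, hn⟩ with hn'
  have hcoe : ((n' : ℕ)) = n := rfl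
  haveI : NeZero (n' : ℕ) := ⟨n'.ne_zero⟩
  haveI : IsCyclotomicExtension {(n' : ℕ)} ℚ (CyclotomicField (n' : ℕ) ℚ) := CyclotomicField.isCyclotomicExtension (n' : ℕ) ℚ
  set K := CyclotomicField (n' : ℕ) ℚ with hK
  haveI : DecidableEq K := Classical.decEq K
  haveI : FiniteDimensional ℚ K := IsCyclotomicExtension.finiteDimensional {(n' : ℕ)} ℚ K
  haveI : IsGalois ℚ K := IsCyclotomicExtension.isGalois {(n' : ℕ)} ℚ K
  obtain ⟨ζ, hζ⟩ := IsCyclotomicExtension.exists_isPrimitiveRoot ℚ K (Set.mem_singleton (n' : ℕ)) n'.ne_zero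
  have hζn : IsPrimitiveRoot ζ n := by exact hζ
  have hξ : IsPrimitiveRoot (Complex.exp (2 * Real.pi * Complex.I / n)) n :=
    Complex.isPrimitiveRoot_exp n hn.ne'
  haveI : Algebra.IsAlgebraic ℚ K := Algebra.IsAlgebraic.of_finite ℚ K
  let φ : K →ₐ[ℚ] ℂ := IsAlgClosed.lift
  set WK : K := (((Polynomial.nthRoots n (1:K)).erase 1).map (fun l => aeval l q)).prod with hWK
  -- Galois fixedness
  have hfix : WK ∈ IntermediateField.fixedField (⊤ : Subgroup (K ≃ₐ[ℚ] K)) := by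
    intro g
    show (g : K ≃ₐ[ℚ] K) • WK = WK
    rw [AlgEquiv.smul_def, hWK]
    exact prod_transfer hn (g : K ≃ₐ[ℚ] K).toAlgHom.toRingHom hζn
      (hζn.map_of_injective (g : K ≃ₐ[ℚ] K).injective) q
  have hGal : IsGalois ℚ K := inferInstance
  have htop : IntermediateField.fixedField (⊤ : Subgroup (K ≃ₐ[ℚ] K)) = ⊥ :=
    ((IsGalois.tfae (F := ℚ) (E := K)).out 0 1).mp hGal
  rw [htop, IntermediateField.mem_bot] at hfix
  obtain ⟨w, hw⟩ := hfix
  -- integrality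
  have hint : WK ∈ integralClosure ℤ K := by
    rw [hWK]
    refine Subalgebra.multiset_prod_mem _ ?_
    intro x hx
    obtain ⟨l, hl, rfl⟩ := Multiset.mem_map.mp hx
    have hln : l ^ n = 1 :=
      (Polynomial.mem_nthRoots hn).mp (Multiset.mem_of_mem_erase hl)
    have hlint : IsIntegral ℤ l := by
      refine ⟨X ^ n - C 1, Polynomial.monic_X_pow_sub_C 1 hn.ne', ?_⟩
      simp [eval₂_sub, eval₂_pow, hln]
    have hmem : aeval l q ∈ Algebra.adjoin ℤ ({l} : Set K) := by
      rw [Algebra.adjoin_singleton_eq_range_aeval]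
      exact ⟨q, rfl⟩
    have hle : Algebra.adjoin ℤ ({l} : Set K) ≤ integralClosure ℤ K := by
      apply Algebra.adjoin_le
      intro y hy
      rw [Set.mem_singleton_iff] at hy
      subst hy
      exact hlint
    exact hle hmem
  have hwint : IsIntegral ℤ w := by
    rw [← hw] at hint
    exact (isIntegral_algebraMap_iff (algebraMap ℚ K).injective).mp hint
  obtain ⟨z, hz⟩ := IsIntegrallyClosed.isIntegral_iff.mp hwint
  refine ⟨z, ?_⟩
  have := prod_transfer hn φ.toRingHom hζn (hζn.map_of_injective φ.injective) q
  rw [← (show φ WK = _ from this), ← hw]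
  show φ (algebraMap ℚ K w) = _
  rw [φ.commutes, ← hz]
  simp




lemma abs_eval_ge_one (r s : ℕ) (hrs : s = r + 1 ∨ r = s + 1) {l : ℂ}
    (hl : Complex.normSq l = 1) (hl1 : l ≠ 1) :
    1 ≤ ‖aeval l (FF r s)‖ := by
  by_cases h : l ^ r = 1 ∨ l ^ s = 1
  · exact le_of_eq (abs_eval_eq_one r s hrs hl hl1 h).symm
  · push_neg at h
    exact le_of_lt (abs_eval_gt_one r s hrs hl hl1 h.1 h.2)

lemma one_le_multiset_prod (s : Multiset ℝ) (h : ∀ x ∈ s, 1 ≤ x) : 1 ≤ s.prod := by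
  induction s using Multiset.induction_on with
  | empty => simp
  | cons a t ih =>
    rw [Multiset.prod_cons]
    have h1 := h a (Multiset.mem_cons_self a t)
    have h2 := ih (fun x hx => h x (Multiset.mem_cons_of_mem hx))
    nlinarith

open Polynomial in
theorem stmt_9 (r s n : ℕ) (hr : 1 ≤ r) (hs : 1 ≤ s) (hn : 2 ≤ n) :
    ‖(((Polynomial.nthRoots n (1 : ℂ)).map (fun lam =>
          Polynomial.aeval lam
            ((∑ i ∈ Finset.range r, (X : ℤ[X]) ^ i) -
              X ^ r * ∑ i ∈ Finset.range s, (X : ℤ[X]) ^ i))).prod)‖ = 1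
      ↔ (|(r : ℤ) - (s : ℤ)| = 1 ∧ (n ∣ r ∨ n ∣ s)) := by
  have hn0 : 0 < n := by omega
  show ‖((Polynomial.nthRoots n (1 : ℂ)).map (fun lam => aeval lam (FF r s))).prod‖ = 1 ↔ _
  have hprim : IsPrimitiveRoot (Complex.exp (2 * Real.pi * Complex.I / n)) n :=
    Complex.isPrimitiveRoot_exp n hn0.ne'
  set ζ : ℂ := Complex.exp (2 * Real.pi * Complex.I / n) with hζdef
  have hnodup : (Polynomial.nthRoots n (1:ℂ)).Nodup := hprim.nthRoots_nodup one_ne_zero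
  have h1mem : (1:ℂ) ∈ Polynomial.nthRoots n (1:ℂ) :=
    (Polynomial.mem_nthRoots hn0).mpr (one_pow n)
  have hPW := (Multiset.prod_map_erase (f := fun lam => aeval lam (FF r s)) h1mem).symm
  constructor
  · intro H
    obtain ⟨z, hz⟩ := exists_int_prod (FF r s) n hn0
    rw [hPW, norm_mul, abs_aeval_one, hz, Complex.norm_intCast] at H
    rw [← Int.cast_abs, ← Int.cast_mul, show (1:ℝ) = ((1:ℤ):ℝ) by norm_num, Int.cast_inj] at H
    have habs1 : |(r:ℤ) - s| = 1 :=
      Int.eq_one_of_mul_eq_one_right (abs_nonneg _) H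
    have habsz : |z| = 1 :=
      Int.eq_one_of_mul_eq_one_left (abs_nonneg _) H
    refine ⟨habs1, ?_⟩
    have hrs : s = r + 1 ∨ r = s + 1 := by
      rcases abs_eq (by norm_num : (0:ℤ) ≤ 1) |>.mp habs1 with h | h <;> omega
    by_contra hcon
    push_neg at hcon
    obtain ⟨hnr, hns⟩ := hcon
    -- |W| = 1
    have hWabs : ‖(((Polynomial.nthRoots n (1:ℂ)).erase 1).map
        (fun l => aeval l (FF r s))).prod‖ = 1 := by
      rw [hz, Complex.norm_intCast, ← Int.cast_abs, habsz, Int.cast_one]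
    have hζne1 : ζ ≠ 1 := hprim.ne_one hn
    have hζmem : ζ ∈ Polynomial.nthRoots n (1:ℂ) :=
      (Polynomial.mem_nthRoots hn0).mpr hprim.pow_eq_one
    have hζerase : ζ ∈ (Polynomial.nthRoots n (1:ℂ)).erase 1 :=
      hnodup.mem_erase_iff.mpr ⟨hζne1, hζmem⟩
    have hW2 := (Multiset.prod_map_erase (f := fun lam => aeval lam (FF r s)) hζerase).symm
    rw [hW2, norm_mul] at hWabs
    have hζr : ζ ^ r ≠ 1 := fun h => hnr ((hprim.pow_eq_one_iff_dvd r).mp h)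
    have hζs : ζ ^ s ≠ 1 := fun h => hns ((hprim.pow_eq_one_iff_dvd s).mp h)
    have hgt : 1 < ‖aeval ζ (FF r s)‖ :=
      abs_eval_gt_one r s hrs (normSq_one_of_pow hn0.ne' hprim.pow_eq_one) hζne1 hζr hζs
    have hrest : 1 ≤ ‖((((Polynomial.nthRoots n (1:ℂ)).erase 1).erase ζ).map
        (fun l => aeval l (FF r s))).prod‖ := by
      rw [← normHom_apply, map_multiset_prod, Multiset.map_map]
      apply one_le_multiset_prod
      intro x hx
      obtain ⟨l, hl, rfl⟩ := Multiset.mem_map.mp hx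
      have hl1 : l ∈ (Polynomial.nthRoots n (1:ℂ)).erase 1 := Multiset.mem_of_mem_erase hl
      have hlne : l ≠ 1 := (hnodup.mem_erase_iff.mp hl1).1
      have hlmem : l ∈ Polynomial.nthRoots n (1:ℂ) := (hnodup.mem_erase_iff.mp hl1).2
      have hln : l ^ n = 1 := (Polynomial.mem_nthRoots hn0).mp hlmem
      exact abs_eval_ge_one r s hrs (normSq_one_of_pow hn0.ne' hln) hlne
    nlinarith
  · rintro ⟨habs1, hdvd⟩
    have hrs : s = r + 1 ∨ r = s + 1 := by
      rcases abs_eq (by norm_num : (0:ℤ) ≤ 1) |>.mp habs1 with h | h <;> omega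
    rw [← normHom_apply, map_multiset_prod, Multiset.map_map]
    apply Multiset.prod_eq_one
    intro x hx
    obtain ⟨l, hl, rfl⟩ := Multiset.mem_map.mp hx
    have hln : l ^ n = 1 := (Polynomial.mem_nthRoots hn0).mp hl
    by_cases hl1 : l = 1
    · subst hl1
      show ‖aeval (1:ℂ) (FF r s)‖ = 1
      rw [abs_aeval_one, habs1, Int.cast_one]
    · refine abs_eval_eq_one r s hrs (normSq_one_of_pow hn0.ne' hln) hl1 ?_
      rcases hdvd with ⟨k, rfl⟩ | ⟨k, rfl⟩
      · left; rw [pow_mul, hln, one_pow]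
      · right; rw [pow_mul, hln, one_pow]
end

section
/- Let n ≥ 2, q ≥ 1 with gcd(n, q) = 1, let k ≥ 1, let r = α·n + r' and s = β·n + s' with α, β ≥ 0 and 1 ≤ r', s' ≤ n and r' ≠ s'. Let f(t) = Σ_{i=0}^{r-1} t^{iq} − t^{k-1}·Σ_{i=0}^{s-1} t^{iq} and f'(t) = Σ_{i=0}^{r'-1} t^{iq} − t^{k-1}·Σ_{i=0}^{s'-1} t^{iq}. Then (r' − s') · Π_{λ^n=1} f(λ) = (r − s) · Π_{λ^n=1} f'(λ). -/
theorem stmt_10 (n q k : ℕ) (hn : 2 ≤ n) (hq : 1 ≤ q) (hk : 1 ≤ k)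
    (hgcd : Nat.gcd n q = 1) (α β : ℕ) (r' s' r s : ℕ)
    (hr'1 : 1 ≤ r') (hr'n : r' ≤ n) (hs'1 : 1 ≤ s') (hs'n : s' ≤ n) (hne : r' ≠ s')
    (hr : r = α * n + r') (hs : s = β * n + s')
    (f f' : ℂ → ℂ)
    (hf : ∀ t : ℂ, f t = (∑ i ∈ Finset.range r, t ^ (i * q)) -
        t ^ (k - 1) * ∑ i ∈ Finset.range s, t ^ (i * q))
    (hf' : ∀ t : ℂ, f' t = (∑ i ∈ Finset.range r', t ^ (i * q)) -
        t ^ (k - 1) * ∑ i ∈ Finset.range s', t ^ (i * q)) :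
    ((r' : ℂ) - (s' : ℂ)) * ((Polynomial.nthRoots n (1 : ℂ)).map f).prod
      = ((r : ℂ) - (s : ℂ)) * ((Polynomial.nthRoots n (1 : ℂ)).map f').prod := by
  have hn0 : 0 < n := by omega
  have hζ := Complex.isPrimitiveRoot_exp n (by omega)
  have hnd : (Polynomial.nthRoots n (1 : ℂ)).Nodup := hζ.nthRoots_one_nodup
  have h1mem : (1 : ℂ) ∈ Polynomial.nthRoots n (1 : ℂ) := by
    rw [Polynomial.mem_nthRoots hn0]; simp
  set T := (Polynomial.nthRoots n (1 : ℂ)).erase 1 with hT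
  have hcons : Polynomial.nthRoots n (1 : ℂ) = 1 ::ₘ T :=
    (Multiset.cons_erase h1mem).symm
  have h1T : (1 : ℂ) ∉ T := fun h => (Multiset.Nodup.notMem_erase hnd h)
  -- values at 1
  have hf1 : f 1 = (r : ℂ) - (s : ℂ) := by simp [hf 1]
  have hf'1 : f' 1 = (r' : ℂ) - (s' : ℂ) := by simp [hf' 1]
  -- equality away from 1
  have key : ∀ x ∈ T, f x = f' x := by
    intro x hxT
    have hxmem : x ∈ Polynomial.nthRoots n (1 : ℂ) := Multiset.mem_of_mem_erase hxT
    have hxn : x ^ n = 1 := (Polynomial.mem_nthRoots hn0).mp hxmem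
    have hx1 : x ≠ 1 := fun h => h1T (h ▸ hxT)
    have hμ : x ^ q ≠ 1 := by
      intro hxq
      have := pow_gcd_eq_one.mpr ⟨hxn, hxq⟩
      rw [hgcd, pow_one] at this
      exact hx1 this
    have hsum : ∀ (a b m : ℕ), m = a * n + b →
        (∑ i ∈ Finset.range m, x ^ (i * q)) = ∑ i ∈ Finset.range b, x ^ (i * q) := by
      intro a b m hm
      have hrw : ∀ i : ℕ, x ^ (i * q) = (x ^ q) ^ i := by
        intro i; rw [← pow_mul, mul_comm]
      simp only [hrw]
      rw [geom_sum_eq hμ, geom_sum_eq hμ]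
      congr 1
      have : (x ^ q) ^ m = (x ^ q) ^ b := by
        have hqn : (x ^ q) ^ n = 1 := by
          rw [← pow_mul, mul_comm, pow_mul, hxn, one_pow]
        rw [hm, pow_add, mul_comm a n, pow_mul, hqn, one_pow, one_mul]
      rw [this]
    rw [hf x, hf' x, hsum α r' r hr, hsum β s' s hs]
  have hprodT : (T.map f).prod = (T.map f').prod := by
    rw [Multiset.map_congr rfl key]
  rw [hcons]
  simp only [Multiset.map_cons, Multiset.prod_cons, hf1, hf'1, hprodT]
  ring
end

section
/- Let n ≥ 2 and k, q, r ≥ 1 be integers such that gcd(n, k − 1) = 1 and 2(k − 1) ≡ q (mod n). Then gcd(n, 2r − 1) = gcd(n, k − 1 − q·r). -/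
lemma gcd_dvd_of_modeq {n a b : ℤ} (h : a ≡ b [ZMOD n]) : Int.gcd n a ∣ Int.gcd n b := by
  obtain ⟨c, hc⟩ := h.dvd
  have h1 : (Int.gcd n a : ℤ) ∣ n := Int.gcd_dvd_left n a
  have h2 : (Int.gcd n a : ℤ) ∣ a := Int.gcd_dvd_right n a
  have hb : b = a + n * c := by linarith
  have h3 : (Int.gcd n a : ℤ) ∣ b := hb ▸ dvd_add h2 (h1.mul_right c)
  exact Int.natCast_dvd_natCast.mp (Int.dvd_coe_gcd h1 h3)

lemma gcd_modeq {n a b : ℤ} (h : a ≡ b [ZMOD n]) : Int.gcd n a = Int.gcd n b :=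
  Nat.dvd_antisymm (gcd_dvd_of_modeq h) (gcd_dvd_of_modeq h.symm)

theorem stmt_12 (n k q r : ℕ) (hn : 2 ≤ n) (hk : 1 ≤ k) (hq : 1 ≤ q) (hr : 1 ≤ r)
    (hgcd : Nat.gcd n (k - 1) = 1)
    (hcong : (2 * ((k : ℤ) - 1)) ≡ (q : ℤ) [ZMOD n]) :
    Int.gcd (n : ℤ) (2 * (r : ℤ) - 1) = Int.gcd (n : ℤ) ((k : ℤ) - 1 - (q : ℤ) * r) := by
  have hc : ((k : ℤ) - 1 - (q : ℤ) * r) ≡ (-(((k : ℤ) - 1) * (2 * (r : ℤ) - 1))) [ZMOD n] := by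
    have h := (Int.ModEq.refl ((k : ℤ) - 1)).sub (hcong.symm.mul_right (r : ℤ))
    have : (k : ℤ) - 1 - 2 * ((k : ℤ) - 1) * r = -(((k : ℤ) - 1) * (2 * (r : ℤ) - 1)) := by ring
    exact this ▸ h
  rw [gcd_modeq hc]
  have hna : ((k : ℤ) - 1).natAbs = k - 1 := by
    have : (k : ℤ) - 1 = ((k - 1 : ℕ) : ℤ) := by
      have := Nat.cast_sub hk (R := ℤ); omega
    rw [this, Int.natAbs_natCast]
  have hcop : Nat.Coprime n ((k : ℤ) - 1).natAbs := by rw [hna]; exact hgcd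
  rw [Int.gcd, Int.gcd, Int.natAbs_neg, Int.natAbs_mul, Int.natAbs_natCast]
  exact (Nat.Coprime.gcd_mul_left_cancel_right _ hcop.symm).symm
end

section
/- Let f ∈ ℤ[X] and n ≥ 1. Then the integer f(1) divides the product of f(λ) taken over all complex n-th roots of unity λ (this product being an integer). -/
open Polynomial in
theorem stmt_13 (f : ℤ[X]) (n : ℕ) (hn : 1 ≤ n) :
    ∃ m : ℤ, ((Polynomial.nthRoots n (1 : ℂ)).map (fun lam => Polynomial.aeval lam f)).prod
      = ((f.eval 1 : ℤ) : ℂ) * (m : ℂ) := by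
  classical
  have hn0 : n ≠ 0 := by omega
  set n' : ℕ+ := ⟨n, hn⟩ with hn'
  let K := CyclotomicField n' ℚ
  haveI : IsCyclotomicExtension {(n' : ℕ)} ℚ K :=
    CyclotomicField.instIsCyclotomicExtensionSingletonNatSetOfCharZero ..
  haveI : IsGalois ℚ K := IsCyclotomicExtension.isGalois {(n' : ℕ)} ℚ K
  haveI : FiniteDimensional ℚ K := IsCyclotomicExtension.finiteDimensional {(n' : ℕ)} ℚ K
  have hspl : Splits ((X : K[X]) ^ n - C 1) := by
    have h := IsCyclotomicExtension.splits_X_pow_sub_one (S := {(n' : ℕ)}) ℚ K (Set.mem_singleton (n' : ℕ))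
    simpa [hn'] using h
  let ι : K →ₐ[ℚ] ℂ := IsAlgClosed.lift
  -- the nth roots in ℂ are images of those in K
  have hmapP : ((X : K[X]) ^ n - C 1).map (ι : K →+* ℂ) = (X : ℂ[X]) ^ n - C 1 := by
    simp
  have hroots : nthRoots n (1 : ℂ) = (nthRoots n (1 : K)).map ι := by
    have := hspl.roots_map (ι : K →+* ℂ)
    rw [hmapP] at this
    exact this
  -- 1 is a root; split it off
  have h1 : (1 : K) ∈ nthRoots n (1 : K) := (mem_nthRoots hn).2 (one_pow n)
  set M : Multiset K := (nthRoots n (1 : K)).erase 1 with hM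
  have hcons : nthRoots n (1 : K) = (1 : K) ::ₘ M := (Multiset.cons_erase h1).symm
  set PK : K := (M.map (fun lam => aeval lam f)).prod with hPK
  -- auxiliary: ring homs commute with aeval of integer polynomials
  have haeval : ∀ {A B : Type} [inst : CommRing A] [inst2 : CommRing B] (g : A →+* B) (x : A),
      g (aeval x f) = aeval (g x) f := by
    intro A B _ _ g x
    rw [aeval_def, aeval_def, hom_eval₂]
    congr 1
    exact Subsingleton.elim _ _
  -- PK is fixed by the Galois group
  have hfix : ∀ σ : K ≃ₐ[ℚ] K, σ PK = PK := by
    intro σ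
    have hrootsσ : (nthRoots n (1 : K)).map σ = nthRoots n (1 : K) := by
      have h2 := hspl.roots_map (σ : K →+* K)
      have : ((X : K[X]) ^ n - C 1).map (σ : K →+* K) = (X : K[X]) ^ n - C 1 := by simp
      rw [this] at h2
      exact h2.symm
    have hMσ : M.map σ = M := by
      rw [hM, Multiset.map_erase _ σ.injective, map_one, hrootsσ]
    calc σ PK = ((M.map (fun lam => aeval lam f)).map σ).prod := by
          rw [hPK]; exact map_multiset_prod (σ : K →+* K) _
      _ = ((M.map σ).map (fun lam => aeval lam f)).prod := by
          rw [Multiset.map_map, Multiset.map_map]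
          congr 1
          exact Multiset.map_congr rfl (fun x _ => haeval (σ : K →+* K) x)
      _ = PK := by rw [hMσ, hPK]
  -- hence PK comes from ℚ
  have hbot : PK ∈ (⊥ : IntermediateField ℚ K) := by
    have h1' : IntermediateField.fixedField (⊤ : Subgroup (K ≃ₐ[ℚ] K)) =
        (⊥ : IntermediateField ℚ K) := by
      rw [← IntermediateField.fixingSubgroup_bot (F := ℚ) (E := K)]
      exact IsGalois.fixedField_fixingSubgroup ⊥
    rw [← h1']
    exact fun g => hfix g.1
  obtain ⟨q, hq⟩ := IntermediateField.mem_bot.1 hbot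
  -- PK is integral over ℤ
  have hint : PK ∈ integralClosure ℤ K := by
    refine Subalgebra.multiset_prod_mem _ ?_
    intro x hx
    obtain ⟨lam, hlam, rfl⟩ := Multiset.mem_map.1 hx
    have hlam' : lam ^ n = 1 := (mem_nthRoots hn).1 (Multiset.mem_of_mem_erase hlam)
    have hlamInt : IsIntegral ℤ lam :=
      ⟨(X : ℤ[X]) ^ n - C 1, monic_X_pow_sub_C 1 hn0, by simp [hlam']⟩
    have : aeval lam f ∈ Algebra.adjoin ℤ {lam} := aeval_mem_adjoin_singleton ℤ lam
    refine Algebra.adjoin_le ?_ this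
    exact Set.singleton_subset_iff.2 hlamInt
  -- so PK is an integer
  have hqint : IsIntegral ℤ q := by
    rw [← isIntegral_algebraMap_iff (algebraMap ℚ K).injective, hq]
    exact hint
  obtain ⟨z, hz⟩ := IsIntegrallyClosed.isIntegral_iff.1 hqint
  refine ⟨z, ?_⟩
  -- compute the product over ℂ
  rw [hroots, hcons]
  rw [Multiset.map_cons, Multiset.map_cons, Multiset.prod_cons]
  have h1C : aeval (ι 1) f = ((f.eval 1 : ℤ) : ℂ) := by
    rw [map_one]
    have h : ((aeval (1 : ℤ) f : ℤ) : ℂ) = aeval (((1 : ℤ) : ℤ) : ℂ) f :=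
      haeval (Int.castRingHom ℂ) 1
    rw [Int.cast_one] at h
    rw [← h]
    congr 1
  rw [h1C]
  congr 1
  have hι : ι PK = ((M.map ι).map (fun lam => aeval lam f)).prod := by
    rw [hPK, map_multiset_prod ι, Multiset.map_map, Multiset.map_map]
    exact congrArg _ (Multiset.map_congr rfl fun x _ => haeval (ι : K →+* ℂ) x)
  rw [← hι, ← hq, ← hz]
  simp [ι.commutes]
end

section
/- Let n ≥ 2 and r ≥ 1 with n dividing r, and let f(t) = Σ_{i=0}^{r-1} t^i − t^r·Σ_{i=0}^{r-2} t^i ∈ ℤ[t]. Then the image of f in ℤ[t]/(t^n − 1) is a unit. -/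
open Polynomial in
theorem stmt_16 (n r : ℕ) (hn : 2 ≤ n) (hr : 1 ≤ r) (hdvd : n ∣ r) :
    IsUnit (Ideal.Quotient.mk (Ideal.span {(X : ℤ[X]) ^ n - 1})
      ((∑ i ∈ Finset.range r, (X : ℤ[X]) ^ i) -
        X ^ r * ∑ i ∈ Finset.range (r - 1), (X : ℤ[X]) ^ i)) := by
  set Q := Ideal.Quotient.mk (Ideal.span {(X : ℤ[X]) ^ n - 1}) with hQ
  have hXn : Q X ^ n = 1 := by
    have h0 : Q ((X : ℤ[X]) ^ n - 1) = 0 :=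
      Ideal.Quotient.eq_zero_iff_mem.mpr (Ideal.subset_span rfl)
    have := sub_eq_zero.mp (by simpa [map_sub] using h0)
    simpa [map_pow] using this
  have hXr : Q X ^ r = 1 := by
    obtain ⟨k, rfl⟩ := hdvd
    rw [pow_mul, hXn, one_pow]
  have hXunit : IsUnit (Q X) := by
    refine IsUnit.of_mul_eq_one (a := Q X) (Q X ^ (n - 1)) ?_
    rw [← pow_succ', Nat.sub_add_cancel (by omega)]
    exact hXn
  have hkey : Q ((∑ i ∈ Finset.range r, (X : ℤ[X]) ^ i) -
      X ^ r * ∑ i ∈ Finset.range (r - 1), (X : ℤ[X]) ^ i) = Q X ^ (r - 1) := by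
    have hr' : r = (r - 1) + 1 := (Nat.succ_pred_eq_of_pos hr).symm
    rw [hr', Finset.sum_range_succ]
    simp only [map_sub, map_add, map_mul, map_pow, map_sum]
    rw [← hr', hXr]
    ring
  rw [hkey]
  exact hXunit.pow _
end
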